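/- arXiv:2101.03978 — 2 statements merged into one kernel-verified Lean document; each statement's English description precedes it below -/
import Mathlib

section
/- Let C be a cycle of π and let (i = i_1, …, i_{r+1} = m = j_{r+1}, j_r, …, j_1 = i') be the best b-staircase on C with respect to π. Then for every k the level sets computed for π^{−1} satisfy E_k(π^{−1}) ∩ C = E_k(π) ∩ C, and the reversed sequence (i' = j_1, j_2, …, j_{r+1} = m = i_{r+1}, i_r, …, i_1 = i) is the best b-staircase on the cycle C of π^{−1}; in particular, the middle of the best b-staircase is unchanged by inverting the cycle. -/
attribute [local instance] Classical.propDecidable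

variable {n : ℕ}

/-- The first element of `E` encountered strictly after `x` when following `π` along its cycle
(`x` itself if no element of `E` is reachable).  For `E = E_r` this is the map `π_r`. -/
noncomputable def nextIn (π : Equiv.Perm (Fin n)) (E : Finset (Fin n)) (x : Fin n) : Fin n :=
  if h : ∃ k, 0 < k ∧ (⇑π)^[k] x ∈ E then (⇑π)^[Nat.find h] x else x

/-- `b`-fold iteration of `nextIn`; for `E = E_r` this is `π_r^b`. -/
noncomputable def stepB (π : Equiv.Perm (Fin n)) (b : ℕ) (E : Finset (Fin n)) (x : Fin n) :
    Fin n :=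
  (nextIn π E)^[b] x

/-- `level π b r` is the set `E_{r+1}` (0-indexed): `level π b 0 = E_1 = [n]`, and `E_{r+1}`
consists of the elements `i` of `E_r` with `i < π_r^k(i)` for all `k ∈ {−b,…,b} \ {0}`. -/
noncomputable def level (π : Equiv.Perm (Fin n)) (b : ℕ) : ℕ → Finset (Fin n)
  | 0 => Finset.univ
  | r + 1 =>
    (level π b r).filter fun i =>
      (∀ k ∈ Finset.Icc 1 b, i < (nextIn π (level π b r))^[k] i) ∧
      (∀ k ∈ Finset.Icc 1 b, i < (nextIn π⁻¹ (level π b r))^[k] i)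

/-- The cycle of `π` containing `x`, as a finset. -/
def cycleOfF (π : Equiv.Perm (Fin n)) (x : Fin n) : Finset (Fin n) :=
  (Finset.range n).image fun k => (⇑π)^[k] x

/-- `iSeq π b i k` is the element `i_{k+1}` of the `b`-staircase from `i`:
`i_1 = i` and `i_{k+1} = π_k^b(i_k)`. -/
noncomputable def iSeq (π : Equiv.Perm (Fin n)) (b : ℕ) (i : Fin n) : ℕ → Fin n
  | 0 => i
  | k + 1 => stepB π b (level π b k) (iSeq π b i k)

/-- `jSeq π b r m q` is the element `j_{r+1-q}` of the descending part of the `b`-staircase of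
size `r` with middle `m`: `j_{r+1} = m` and `j_k = π_k^b(j_{k+1})`. -/
noncomputable def jSeq (π : Equiv.Perm (Fin n)) (b : ℕ) (r : ℕ) (m : Fin n) : ℕ → Fin n
  | 0 => m
  | q + 1 => stepB π b (level π b (r - (q + 1))) (jSeq π b r m q)

/-- The sequence `(i = i_1, …, i_{r+1} = m = j_{r+1}, j_r, …, j_1 = i')` is a `b`-staircase of
size `r` from `i`: `i_k, j_k ∈ E_k` for all `k ∈ [r+1]`. -/
def IsStaircase (π : Equiv.Perm (Fin n)) (b r : ℕ) (i : Fin n) : Prop :=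
  ∀ k ≤ r, iSeq π b i k ∈ level π b k ∧
    jSeq π b r (iSeq π b i r) k ∈ level π b (r - k)

/-- An almost `b`-staircase of size `r` from `i`: membership `i_k, j_k ∈ E_k` is required only
for `k ∈ [r]`. -/
def IsAlmost (π : Equiv.Perm (Fin n)) (b r : ℕ) (i : Fin n) : Prop :=
  (∀ k < r, iSeq π b i k ∈ level π b k) ∧
  (∀ q, 1 ≤ q → q ≤ r → jSeq π b r (iSeq π b i r) q ∈ level π b (r - q))

/-- The `b`-staircase of size `r` from `i` is the best `b`-staircase from `i`: there is no
proper (i.e. with `|E_{r+1} ∩ C| > b`, where `C` is the cycle of `i`) almost `b`-staircase of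
size `r+1` from `i`. -/
def IsBest (π : Equiv.Perm (Fin n)) (b r : ℕ) (i : Fin n) : Prop :=
  IsStaircase π b r i ∧
    ¬ (IsAlmost π b (r + 1) i ∧ b < ((level π b r) ∩ cycleOfF π i).card)

/-- Fich et al.'s (`b = 1`) notion: the staircase of size `r` from `i` is the best staircase
from `i`, where an almost staircase of size `r+1` is proper iff `i_{r+1} ≠ m'` (its middle). -/
def IsBest1 (π : Equiv.Perm (Fin n)) (r : ℕ) (i : Fin n) : Prop :=
  IsStaircase π 1 r i ∧
    ¬ (IsAlmost π 1 (r + 1) i ∧ iSeq π 1 i r ≠ iSeq π 1 i (r + 1))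

section Aux

variable {E : Finset (Fin n)} {b : ℕ}

private lemma exists_ret (π : Equiv.Perm (Fin n)) {E : Finset (Fin n)} {x : Fin n}
    (hx : x ∈ E) : ∃ k, 0 < k ∧ (⇑π)^[k] x ∈ E :=
  ⟨orderOf π, orderOf_pos π, by
    rw [Equiv.Perm.iterate_eq_pow, pow_orderOf_eq_one]; simpa using hx⟩

private lemma nextIn_mem (π : Equiv.Perm (Fin n)) {E : Finset (Fin n)} {x : Fin n}
    (hx : x ∈ E) : nextIn π E x ∈ E := by
  rw [nextIn, dif_pos (exists_ret π hx)]
  exact (Nat.find_spec (exists_ret π hx)).2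

private lemma nextIn_sameCycle (π : Equiv.Perm (Fin n)) (E : Finset (Fin n)) (x : Fin n) :
    π.SameCycle x (nextIn π E x) := by
  rw [nextIn]
  split
  · exact ⟨(Nat.find ‹_› : ℕ), by rw [zpow_natCast, ← Equiv.Perm.iterate_eq_pow]⟩
  · exact Equiv.Perm.SameCycle.refl _ _

private lemma inv_iterate (π : Equiv.Perm (Fin n)) :
    ∀ a k : ℕ, a ≤ k → ∀ x : Fin n, (⇑π⁻¹)^[a] ((⇑π)^[k] x) = (⇑π)^[k - a] x := by
  intro a
  induction a with
  | zero => simp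
  | succ a ih =>
    intro k h x
    rw [Function.iterate_succ_apply', ih k (by omega) x]
    have hk : k - a = (k - (a + 1)) + 1 := by omega
    rw [hk, Function.iterate_succ_apply']
    exact Equiv.symm_apply_apply π _

private lemma nextIn_inv_nextIn (π : Equiv.Perm (Fin n)) {E : Finset (Fin n)} {x : Fin n}
    (hx : x ∈ E) : nextIn π⁻¹ E (nextIn π E x) = x := by
  have h := exists_ret π hx
  have hk0 : 0 < Nat.find h := (Nat.find_spec h).1
  have hne : nextIn π E x = (⇑π)^[Nat.find h] x := by rw [nextIn, dif_pos h]
  have hback : (⇑π⁻¹)^[Nat.find h] (nextIn π E x) = x := by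
    rw [hne, inv_iterate π _ _ le_rfl]; simp
  have h' : ∃ j, 0 < j ∧ (⇑π⁻¹)^[j] (nextIn π E x) ∈ E :=
    ⟨Nat.find h, hk0, by rw [hback]; exact hx⟩
  rw [nextIn, dif_pos h']
  have hj0 : 0 < Nat.find h' := (Nat.find_spec h').1
  have hjmem := (Nat.find_spec h').2
  have hjk : Nat.find h' ≤ Nat.find h := Nat.find_min' h' ⟨hk0, by rw [hback]; exact hx⟩
  have hEq : Nat.find h' = Nat.find h := by
    by_contra hne2
    have hjk' : Nat.find h' < Nat.find h := lt_of_le_of_ne hjk hne2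
    have hmem2 : (⇑π)^[Nat.find h - Nat.find h'] x ∈ E := by
      rw [← inv_iterate π _ _ hjk'.le, ← hne]; exact hjmem
    exact Nat.find_min h (show Nat.find h - Nat.find h' < Nat.find h by omega)
      ⟨by omega, hmem2⟩
  rw [hEq, hback]

private lemma nextIn_nextIn_inv (π : Equiv.Perm (Fin n)) {E : Finset (Fin n)} {x : Fin n}
    (hx : x ∈ E) : nextIn π E (nextIn π⁻¹ E x) = x := by
  have := nextIn_inv_nextIn π⁻¹ hx
  rwa [inv_inv] at this

private lemma stepB_mem (π : Equiv.Perm (Fin n)) (b : ℕ) {E : Finset (Fin n)} {x : Fin n}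
    (hx : x ∈ E) : stepB π b E x ∈ E := by
  induction b with
  | zero => exact hx
  | succ b ih =>
    rw [stepB, Function.iterate_succ_apply']
    exact nextIn_mem π ih

private lemma stepB_sameCycle (π : Equiv.Perm (Fin n)) (b : ℕ) (E : Finset (Fin n))
    (x : Fin n) : π.SameCycle x (stepB π b E x) := by
  induction b with
  | zero => exact Equiv.Perm.SameCycle.refl _ _
  | succ b ih =>
    rw [stepB, Function.iterate_succ_apply']
    exact ih.trans (nextIn_sameCycle π E _)

private lemma stepB_inv_stepB (π : Equiv.Perm (Fin n)) (b : ℕ) {E : Finset (Fin n)} {x : Fin n}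
    (hx : x ∈ E) : stepB π⁻¹ b E (stepB π b E x) = x := by
  induction b with
  | zero => rfl
  | succ b ih =>
    have h1 : stepB π (b + 1) E x = nextIn π E (stepB π b E x) := by
      rw [stepB, Function.iterate_succ_apply']; rfl
    have h2 : stepB π⁻¹ (b + 1) E (stepB π (b + 1) E x) =
        stepB π⁻¹ b E (nextIn π⁻¹ E (stepB π (b + 1) E x)) := by
      rw [stepB, Function.iterate_succ_apply]; rfl
    rw [h2, h1, nextIn_inv_nextIn π (stepB_mem π b hx)]
    exact ih

private lemma level_inv (π : Equiv.Perm (Fin n)) (b : ℕ) :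
    ∀ k, level π⁻¹ b k = level π b k := by
  intro k
  induction k with
  | zero => rfl
  | succ k ih =>
    ext x
    simp only [level, ih, inv_inv, Finset.mem_filter]
    tauto

private lemma level_succ_subset (π : Equiv.Perm (Fin n)) (b k : ℕ) :
    level π b (k + 1) ⊆ level π b k := by
  intro x hx
  simp only [level, Finset.mem_filter] at hx
  exact hx.1

private lemma level_mono (π : Equiv.Perm (Fin n)) (b : ℕ) {j k : ℕ} (h : j ≤ k) :
    level π b k ⊆ level π b j := by
  induction k with
  | zero => simpa [Nat.le_zero.mp h] using Finset.Subset.refl _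
  | succ k ih =>
    rcases Nat.eq_or_lt_of_le h with h' | h'
    · subst h'; exact Finset.Subset.refl _
    · exact (level_succ_subset π b k).trans (ih (by omega))

private lemma mem_cycleOfF {π : Equiv.Perm (Fin n)} {x y : Fin n} :
    y ∈ cycleOfF π x ↔ π.SameCycle x y := by
  constructor
  · intro h
    rw [cycleOfF, Finset.mem_image] at h
    obtain ⟨k, -, rfl⟩ := h
    exact ⟨(k : ℤ), by rw [zpow_natCast, ← Equiv.Perm.iterate_eq_pow]⟩
  · intro h
    rw [cycleOfF, Finset.mem_image]
    by_cases hx : π x = x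
    · have hyx : y = x := by
        obtain ⟨k, hk⟩ := h
        rw [← hk, Equiv.Perm.zpow_apply_eq_self_of_apply_eq_self hx]
      exact ⟨0, Finset.mem_range.2 x.pos, by simp [hyx]⟩
    · obtain ⟨k, hk, hk'⟩ := h.exists_pow_eq_of_mem_support (Equiv.Perm.mem_support.2 hx)
      refine ⟨k, Finset.mem_range.2 ?_, by rw [Equiv.Perm.iterate_eq_pow]; exact hk'⟩
      calc k < (π.cycleOf x).support.card := hk
        _ ≤ n := by simpa using Finset.card_le_univ (π.cycleOf x).support

private lemma iSeq_sameCycle (π : Equiv.Perm (Fin n)) (b : ℕ) (x : Fin n) (k : ℕ) :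
    π.SameCycle x (iSeq π b x k) := by
  induction k with
  | zero => exact Equiv.Perm.SameCycle.refl _ _
  | succ k ih => exact ih.trans (stepB_sameCycle π b _ _)

private lemma jSeq_sameCycle (π : Equiv.Perm (Fin n)) (b r : ℕ) (m : Fin n) (q : ℕ) :
    π.SameCycle m (jSeq π b r m q) := by
  induction q with
  | zero => exact Equiv.Perm.SameCycle.refl _ _
  | succ q ih => exact ih.trans (stepB_sameCycle π b _ _)

private lemma jSeq_mem (π : Equiv.Perm (Fin n)) (b R : ℕ) {M : Fin n}
    (hM : M ∈ level π b (R - 1)) : ∀ q, 1 ≤ q → jSeq π b R M q ∈ level π b (R - q) := by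
  intro q hq
  induction q with
  | zero => omega
  | succ q ih =>
    rcases Nat.eq_zero_or_pos q with h0 | h0
    · subst h0
      exact stepB_mem π b hM
    · have hmem : jSeq π b R M q ∈ level π b (R - q) := ih h0
      exact stepB_mem π b (level_mono π b (show R - (q + 1) ≤ R - q by omega) hmem)

end Aux

/-- Let `C` be a cycle of `π` and let
`(i = i_1, …, i_{r+1} = m = j_{r+1}, j_r, …, j_1 = i')` be the best `b`-staircase on `C` with
respect to `π`.  Then for every `k` the level sets computed for `π⁻¹` satisfy
`E_k(π⁻¹) ∩ C = E_k(π) ∩ C`, and the reversed sequence is the best `b`-staircase on the cycle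
`C` of `π⁻¹`; in particular the middle of the best `b`-staircase is unchanged by inverting the
cycle. -/
theorem best_staircase_of_inverse (n b : ℕ) (hb : 1 ≤ b) (π : Equiv.Perm (Fin n))
    (i : Fin n) (C : Finset (Fin n)) (hC : C = cycleOfF π i)
    (r : ℕ) (hbest : IsBest π b r i)
    (m : Fin n) (hm : m = iSeq π b i r)
    (i' : Fin n) (hi' : i' = jSeq π b r m r) :
    (∀ k, (level π⁻¹ b k) ∩ C = (level π b k) ∩ C) ∧
    IsBest π⁻¹ b r i' ∧
    (∀ k ≤ r, iSeq π⁻¹ b i' k = jSeq π b r m (r - k)) ∧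
    (∀ q ≤ r, jSeq π⁻¹ b r m q = iSeq π b i (r - q)) ∧
    iSeq π⁻¹ b i' r = m := by
  -- staircase facts, with `m` substituted
  have hst : ∀ k ≤ r, iSeq π b i k ∈ level π b k ∧ jSeq π b r m k ∈ level π b (r - k) := by
    intro k hk; rw [hm]; exact hbest.1 k hk
  -- the ascending sequence of π⁻¹ from i' is the reversed descending sequence of π
  have hA : ∀ k ≤ r, iSeq π⁻¹ b i' k = jSeq π b r m (r - k) := by
    intro k
    induction k with
    | zero => intro _; simpa [iSeq] using hi'
    | succ k ih =>
      intro hk1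
      have hk : k ≤ r := by omega
      have e1 : iSeq π⁻¹ b i' (k + 1) = stepB π⁻¹ b (level π⁻¹ b k) (iSeq π⁻¹ b i' k) := rfl
      rw [e1, ih hk, level_inv]
      have e2 : r - k = (r - (k + 1)) + 1 := by omega
      have e3 : jSeq π b r m (r - k) =
          stepB π b (level π b (r - ((r - (k + 1)) + 1))) (jSeq π b r m (r - (k + 1))) := by
        rw [e2]; rfl
      have e4 : r - ((r - (k + 1)) + 1) = k := by omega
      rw [e3, e4]
      have hmem : jSeq π b r m (r - (k + 1)) ∈ level π b (k + 1) := by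
        have h5 := (hst (r - (k + 1)) (by omega)).2
        rwa [show r - (r - (k + 1)) = k + 1 by omega] at h5
      exact stepB_inv_stepB π b (level_succ_subset π b k hmem)
  have hmid : iSeq π⁻¹ b i' r = m := by
    have := hA r le_rfl
    simpa [jSeq] using this
  -- the descending sequence of π⁻¹ from m is the reversed ascending sequence of π
  have hB : ∀ q ≤ r, jSeq π⁻¹ b r m q = iSeq π b i (r - q) := by
    intro q
    induction q with
    | zero => intro _; simpa [jSeq] using hm
    | succ q ih =>
      intro hq1
      have hq : q ≤ r := by omega
      have e1 : jSeq π⁻¹ b r m (q + 1) =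
          stepB π⁻¹ b (level π⁻¹ b (r - (q + 1))) (jSeq π⁻¹ b r m q) := rfl
      rw [e1, ih hq, level_inv]
      have e2 : r - q = (r - (q + 1)) + 1 := by omega
      have e3 : iSeq π b i (r - q) =
          stepB π b (level π b (r - (q + 1))) (iSeq π b i (r - (q + 1))) := by
        rw [e2]; rfl
      rw [e3]
      exact stepB_inv_stepB π b (hst (r - (q + 1)) (by omega)).1
  -- the staircase for π⁻¹
  have hstair' : IsStaircase π⁻¹ b r i' := by
    intro k hk
    constructor
    · rw [hA k hk, level_inv]
      have h5 := (hst (r - k) (by omega)).2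
      rwa [show r - (r - k) = k by omega] at h5
    · rw [hmid, hB k hk, level_inv]
      exact (hst (r - k) (by omega)).1
  -- IsAlmost π b (r+1) i always holds given the staircase
  have halmost : IsAlmost π b (r + 1) i := by
    constructor
    · intro k hk; exact (hst k (by omega)).1
    · intro q hq1 hq2
      have hM : iSeq π b i (r + 1) ∈ level π b ((r + 1) - 1) := by
        have : iSeq π b i (r + 1) = stepB π b (level π b r) (iSeq π b i r) := rfl
        rw [this]
        exact stepB_mem π b (hst r le_rfl).1
      exact jSeq_mem π b (r + 1) hM q hq1
  have hcard : ¬ b < ((level π b r) ∩ cycleOfF π i).card := fun hlt => hbest.2 ⟨halmost, hlt⟩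
  -- i' lies on the cycle of i
  have hsc : π.SameCycle i i' := by
    have h1 := iSeq_sameCycle π b i r
    have h2 := jSeq_sameCycle π b r m r
    rw [← hm] at h1
    rw [← hi'] at h2
    exact h1.trans h2
  have hcyc : cycleOfF π⁻¹ i' = cycleOfF π i := by
    ext y
    rw [mem_cycleOfF, mem_cycleOfF, Equiv.Perm.sameCycle_inv]
    exact ⟨fun h => hsc.trans h, fun h => hsc.symm.trans h⟩
  refine ⟨fun k => by rw [level_inv], ⟨hstair', ?_⟩, fun k hk => hA k hk, fun q hq => hB q hq,
    hmid⟩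
  rintro ⟨-, hlt⟩
  rw [level_inv, hcyc] at hlt
  exact hcard hlt
end

section
/- Let α be a finite set, f : α → α a function, and x ∈ α. Let μ ≥ 0 be the least index such that f^μ(x) = f^{j}(x) for some j > μ, and let ℓ ≥ 1 be the least positive integer with f^{μ+ℓ}(x) = f^μ(x). Then: (i) there exists k with 1 ≤ k ≤ μ + ℓ such that f^k(x) = f^{2k}(x); and (ii) for every k ≥ 1 with f^k(x) = f^{2k}(x), ℓ divides k, and the least index j ≥ 0 with f^j(x) = f^{j+k}(x) equals μ (so the element f^μ(x), the first element of the orbit lying on its eventual cycle, is found by advancing two pointers from x and f^k(x) in lockstep). -/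
/-- **correctness of Floyd's tortoise-and-hare.**  Let `α` be a finite set,
`f : α → α` and `x ∈ α`.  Let `μ ≥ 0` be the least index such that `f^μ(x) = f^j(x)` for some
`j > μ`, and let `ℓ ≥ 1` be the least positive integer with `f^{μ+ℓ}(x) = f^μ(x)`.  Then:
(i) there exists `k` with `1 ≤ k ≤ μ + ℓ` such that `f^k(x) = f^{2k}(x)`; and
(ii) for every `k ≥ 1` with `f^k(x) = f^{2k}(x)`, `ℓ` divides `k`, and the least index `j ≥ 0`
with `f^j(x) = f^{j+k}(x)` equals `μ`. -/
theorem tortoise_and_hare {α : Type*} [Fintype α] (f : α → α) (x : α) (μ ℓ : ℕ)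
    (hμ : ∃ j, μ < j ∧ f^[μ] x = f^[j] x)
    (hμmin : ∀ μ' < μ, ¬ ∃ j, μ' < j ∧ f^[μ'] x = f^[j] x)
    (hℓpos : 1 ≤ ℓ) (hℓ : f^[μ + ℓ] x = f^[μ] x)
    (hℓmin : ∀ ℓ', 1 ≤ ℓ' → ℓ' < ℓ → f^[μ + ℓ'] x ≠ f^[μ] x) :
    (∃ k, 1 ≤ k ∧ k ≤ μ + ℓ ∧ f^[k] x = f^[2 * k] x) ∧
    (∀ k, 1 ≤ k → f^[k] x = f^[2 * k] x →
      ℓ ∣ k ∧ f^[μ] x = f^[μ + k] x ∧ ∀ j < μ, f^[j] x ≠ f^[j + k] x) := by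
  have step : ∀ n, μ ≤ n → f^[n + ℓ] x = f^[n] x := by
    intro n hn
    have h1 : n + ℓ = (n - μ) + (μ + ℓ) := by omega
    have h2 : (n - μ) + μ = n := by omega
    rw [h1, Function.iterate_add_apply, hℓ, ← Function.iterate_add_apply, h2]
  have per : ∀ m n, μ ≤ n → f^[n + ℓ * m] x = f^[n] x := by
    intro m
    induction m with
    | zero => simp
    | succ m ih =>
      intro n hn
      have h1 : n + ℓ * (m + 1) = (n + ℓ) + ℓ * m := by ring
      rw [h1, ih (n + ℓ) (by omega), step n hn]
  have hdm := Nat.div_add_mod μ ℓ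
  have hml : μ % ℓ < ℓ := Nat.mod_lt μ (by omega)
  constructor
  · refine ⟨ℓ * (μ / ℓ) + ℓ, by omega, by omega, ?_⟩
    have h2 : 2 * (ℓ * (μ / ℓ) + ℓ) = (ℓ * (μ / ℓ) + ℓ) + ℓ * (μ / ℓ + 1) := by ring
    rw [h2, per (μ / ℓ + 1) _ (by omega)]
  · intro k hk hke
    have hμk : μ ≤ k := by
      by_contra h
      exact hμmin k (by omega) ⟨2 * k, by omega, hke⟩
    have hdk := Nat.div_add_mod k ℓ
    have hmk : k % ℓ < ℓ := Nat.mod_lt k (by omega)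
    have hkl : k ≤ ℓ * k := Nat.le_mul_of_pos_left k (by omega)
    -- f^[k + k%ℓ] x = f^[k] x
    have A : f^[k + k % ℓ] x = f^[k] x := by
      have h2 : 2 * k = (k + k % ℓ) + ℓ * (k / ℓ) := by omega
      rw [← per (k / ℓ) (k + k % ℓ) (by omega), ← h2, ← hke]
    -- transport to μ
    have hr : f^[μ + k % ℓ] x = f^[μ] x := by
      have h3 : (μ + k % ℓ) + ℓ * k = (μ + ℓ * k - k) + (k + k % ℓ) := by omega
      have h4 : (μ + ℓ * k - k) + k = μ + ℓ * k := by omega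
      calc f^[μ + k % ℓ] x = f^[(μ + k % ℓ) + ℓ * k] x := (per k _ (by omega)).symm
        _ = f^[μ + ℓ * k - k] (f^[k + k % ℓ] x) := by
            rw [h3, Function.iterate_add_apply]
        _ = f^[μ + ℓ * k - k] (f^[k] x) := by rw [A]
        _ = f^[μ + ℓ * k] x := by rw [← Function.iterate_add_apply, h4]
        _ = f^[μ] x := per k μ le_rfl
    have hmod : k % ℓ = 0 := by
      by_contra h
      exact hℓmin (k % ℓ) (by omega) hmk hr
    refine ⟨Nat.dvd_of_mod_eq_zero hmod, ?_, ?_⟩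
    · have h5 : μ + k = μ + ℓ * (k / ℓ) := by omega
      rw [h5, per (k / ℓ) μ le_rfl]
    · intro j hj hje
      exact hμmin j hj ⟨j + k, by omega, hje⟩
end
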